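/- Approximate subgroups of intermediate dimension in ℝ^d (abelian case of Proposition 1.3). Fix an integer d ≥ 1, r > 0 and κ ∈ (0, 1]. Equip ℝ^d with the sup norm. There exist constants c > 0, C > 0 and δ₀ > 0, depending only on d, r and κ, such that for all δ ∈ (0, δ₀) the set P = { δ^{κ} x : x ∈ ℤ^d, |x_j| ≤ δ^{-κ} r for all j } ⊆ ℝ^d satisfies: (i) c δ^{-dκ} ≤ N(P, δ) ≤ C δ^{-dκ}; (ii) N(P + P + P, δ) ≤ C · N(P, δ); (iii) for every linear subspace W of ℝ^d with W ≠ ℝ^d and every ρ with δ ≤ ρ ≤ 1, N(π_W(P), ρ) ≥ c ρ^{-κ}, where π_W : ℝ^d → ℝ^d / W is the canonical projection and ℝ^d / W carries the quotient norm; (iv) for every linear subspace W of ℝ^d with W ≠ ℝ^d there exists p ∈ P with dist(p, W) ≥ c. -/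

import Mathlib

open Metric Pointwise

/-- The covering number `N(S,ρ)`: the least cardinality of a cover of `S` by closed
balls of radius `ρ` (equal to `0` by convention if no finite cover exists; all sets
considered below admit finite covers). -/
noncomputable def coveringNumber {α : Type*} [PseudoMetricSpace α] (S : Set α) (ρ : ℝ) : ℕ :=
  sInf {n : ℕ | ∃ T : Finset α, T.card = n ∧ S ⊆ ⋃ t ∈ T, Metric.closedBall t ρ}

lemma coveringNumber_le_card {α : Type*} [PseudoMetricSpace α] {S : Set α} {ρ : ℝ}
    (T : Finset α) (h : S ⊆ ⋃ t ∈ T, Metric.closedBall t ρ) :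
    coveringNumber S ρ ≤ T.card :=
  Nat.sInf_le ⟨T, rfl, h⟩

lemma card_le_card_of_cover {α : Type*} [PseudoMetricSpace α] {S : Set α} {ρ : ℝ}
    (Q : Finset α) (hQS : ↑Q ⊆ S)
    (hsep : ∀ a ∈ Q, ∀ b ∈ Q, a ≠ b → 2 * ρ < dist a b)
    (T : Finset α) (hT : S ⊆ ⋃ t ∈ T, Metric.closedBall t ρ) :
    Q.card ≤ T.card := by
  classical
  by_contra hlt
  push_neg at hlt
  have hmap : ∀ a : α, a ∈ Q → ∃ t ∈ T, a ∈ Metric.closedBall t ρ := by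
    intro a ha
    have := hT (hQS ha)
    simpa using this
  set g : α → α := fun a => if h : ∃ t ∈ T, a ∈ Metric.closedBall t ρ then h.choose else a with hg
  have hgmem : ∀ a ∈ Q, g a ∈ T := by
    intro a ha
    have h := hmap a ha
    simp only [hg, dif_pos h]
    exact h.choose_spec.1
  have hgd : ∀ a ∈ Q, dist a (g a) ≤ ρ := by
    intro a ha
    have h := hmap a ha
    simp only [hg, dif_pos h]
    exact h.choose_spec.2
  obtain ⟨x, hx, y, hy, hxy, hgxy⟩ :=
    Finset.exists_ne_map_eq_of_card_lt_of_maps_to hlt hgmem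
  have := hsep x hx y hy hxy
  have h1 := hgd x hx
  have h2 := hgd y hy
  have : dist x y ≤ 2 * ρ := by
    calc dist x y ≤ dist x (g x) + dist (g x) y := dist_triangle _ _ _
    _ ≤ ρ + ρ := by
        refine add_le_add h1 ?_
        rw [hgxy, dist_comm]; exact h2
    _ = 2 * ρ := by ring
  linarith [hsep x hx y hy hxy]

lemma le_coveringNumber {α : Type*} [PseudoMetricSpace α] {S : Set α} {ρ : ℝ}
    (Q : Finset α) (hQS : ↑Q ⊆ S)
    (hsep : ∀ a ∈ Q, ∀ b ∈ Q, a ≠ b → 2 * ρ < dist a b)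
    (hne : ∃ T : Finset α, S ⊆ ⋃ t ∈ T, Metric.closedBall t ρ) :
    Q.card ≤ coveringNumber S ρ := by
  have hnonempty : {n : ℕ | ∃ T : Finset α, T.card = n ∧
      S ⊆ ⋃ t ∈ T, Metric.closedBall t ρ}.Nonempty := by
    obtain ⟨T, hT⟩ := hne; exact ⟨T.card, T, rfl, hT⟩
  obtain ⟨T, hTcard, hTcov⟩ := Nat.sInf_mem hnonempty
  rw [_root_.coveringNumber, ← hTcard]
  exact card_le_card_of_cover Q hQS hsep T hTcov

noncomputable def intBox (d : ℕ) (m : ℤ) : Finset (Fin d → ℤ) :=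
  Fintype.piFinset fun _ => Finset.Icc (-m) m

lemma intBox_mem {d : ℕ} {m : ℤ} {x : Fin d → ℤ} : x ∈ intBox d m ↔ ∀ j, |x j| ≤ m := by
  simp [intBox, Fintype.mem_piFinset, abs_le]

lemma intBox_card (d : ℕ) {m : ℤ} (hm : 0 ≤ m) :
    ((intBox d m).card : ℝ) = ((2*m+1 : ℤ) : ℝ)^d := by
  rw [intBox, Fintype.card_piFinset]
  simp only [Int.card_Icc]
  rw [Finset.prod_const, Finset.card_univ, Fintype.card_fin]
  have h : m + 1 - -m = 2*m+1 := by ring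
  rw [h, Nat.cast_pow]
  congr 1
  rw [← Int.cast_natCast, Int.toNat_of_nonneg (by omega)]

section quot
variable {E : Type*} [NormedAddCommGroup E] [NormedSpace ℝ E]

lemma quot_norm_eq_infDist (W : Submodule ℝ E) (x : E) :
    ‖(Submodule.Quotient.mk x : E ⧸ W)‖ = infDist x (W : Set E) :=
  QuotientAddGroup.norm_mk (S := W.toAddSubgroup) x

lemma quot_norm_lip (W : Submodule ℝ E) (x y : E) :
    |‖(Submodule.Quotient.mk x : E ⧸ W)‖ - ‖(Submodule.Quotient.mk y : E ⧸ W)‖| ≤ ‖x - y‖ := by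
  refine (abs_norm_sub_norm_le _ _).trans ?_
  rw [← Submodule.Quotient.mk_sub]
  exact Submodule.Quotient.norm_mk_le W _

lemma quot_norm_smul (W : Submodule ℝ E) (a : ℝ) (x : E) :
    ‖(Submodule.Quotient.mk (a • x) : E ⧸ W)‖ = |a| * ‖(Submodule.Quotient.mk x : E ⧸ W)‖ := by
  rw [Submodule.Quotient.mk_smul, norm_smul, Real.norm_eq_abs]

lemma exists_norming [FiniteDimensional ℝ E] {W : Submodule ℝ E} (hW : W ≠ ⊤) :
    ∃ v : E, ‖v‖ = 1 ∧ ‖(Submodule.Quotient.mk v : E ⧸ W)‖ = 1 := by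
  obtain ⟨u, -, hu⟩ := SetLike.exists_of_lt (hW.lt_top)
  have hcl : IsClosed (W : Set E) := Submodule.closed_of_finiteDimensional W
  obtain ⟨w, hwW, hwd⟩ := hcl.exists_infDist_eq_dist ⟨0, W.zero_mem⟩ u
  have hne : u - w ≠ 0 := sub_ne_zero.mpr (fun h => hu (h ▸ hwW))
  have hpos : 0 < ‖u - w‖ := norm_pos_iff.mpr hne
  have hkey : ‖(Submodule.Quotient.mk (u - w) : E ⧸ W)‖ = ‖u - w‖ := by
    have h1 : (Submodule.Quotient.mk (u - w) : E ⧸ W) = Submodule.Quotient.mk u := by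
      rw [Submodule.Quotient.mk_sub, (Submodule.Quotient.mk_eq_zero W).mpr hwW, sub_zero]
    rw [h1, quot_norm_eq_infDist, hwd, dist_eq_norm]
  refine ⟨‖u - w‖⁻¹ • (u - w), ?_, ?_⟩
  · rw [norm_smul, Real.norm_eq_abs, abs_of_pos (by positivity)]
    field_simp
  · rw [quot_norm_smul, hkey, abs_of_pos (by positivity)]
    field_simp
end quot

lemma sep_of_close_values {a b ta tb e s : ℝ} (ha : |a - ta| ≤ e) (hb : |b - tb| ≤ e)
    (hab : s ≤ |ta - tb|) : s - 2*e ≤ |a - b| := by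
  rw [abs_le] at ha hb
  rcases le_abs.mp hab with h | h
  · exact le_abs.mpr (Or.inl (by linarith))
  · exact le_abs.mpr (Or.inr (by linarith))


set_option maxHeartbeats 2000000 in
/-- Approximate subgroups of intermediate dimension in `ℝ^d` (abelian case of
Proposition 1.3), with `ℝ^d = Fin d → ℝ` carrying the sup norm. -/
theorem approximate_subgroup_intermediate_dimension
    (d : ℕ) (hd : 1 ≤ d) (r κ : ℝ) (hr : 0 < r) (hκ₀ : 0 < κ) (hκ₁ : κ ≤ 1) :
    ∃ c C δ₀ : ℝ, 0 < c ∧ 0 < C ∧ 0 < δ₀ ∧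
      ∀ δ : ℝ, 0 < δ → δ < δ₀ →
        ∀ P : Set (Fin d → ℝ),
          P = {p | ∃ x : Fin d → ℤ,
                (∀ j, |(x j : ℝ)| ≤ δ ^ (-κ) * r) ∧ p = fun j => δ ^ κ * (x j : ℝ)} →
          -- (i)
          (c * δ ^ (-(d * κ)) ≤ (coveringNumber P δ : ℝ) ∧
            (coveringNumber P δ : ℝ) ≤ C * δ ^ (-(d * κ))) ∧
          -- (ii)
          ((coveringNumber (P + P + P) δ : ℝ) ≤ C * (coveringNumber P δ : ℝ)) ∧
          -- (iii)
          (∀ W : Submodule ℝ (Fin d → ℝ), W ≠ ⊤ →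
            ∀ ρ : ℝ, δ ≤ ρ → ρ ≤ 1 →
              c * ρ ^ (-κ) ≤
                (coveringNumber (Submodule.Quotient.mk (p := W) '' P) ρ : ℝ)) ∧
          -- (iv)
          (∀ W : Submodule ℝ (Fin d → ℝ), W ≠ ⊤ →
            ∃ p ∈ P, c ≤ Metric.infDist p (W : Set (Fin d → ℝ))) := by
  classical
  refine ⟨min ((r/4)^d) (r/20), (3*r)^d + 28^d, min 1 ((r/4) ^ (1/κ)), ?_, ?_, ?_, ?_⟩
  · exact lt_min (by positivity) (by positivity)
  · positivity
  · exact lt_min one_pos (Real.rpow_pos_of_pos (by positivity) _)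
  intro δ hδ0 hδδ₀ P hP
  set c : ℝ := min ((r/4)^d) (r/20) with hc_def
  set C : ℝ := (3*r)^d + 28^d with hC_def
  have hcr20 : c ≤ r/20 := min_le_right _ _
  -- basic estimates
  have hδ1 : δ < 1 := lt_of_lt_of_le hδδ₀ (min_le_left _ _)
  have hδκ : 0 < δ ^ κ := Real.rpow_pos_of_pos hδ0 κ
  have hδκ_r : δ ^ κ ≤ r / 4 := by
    have h1 : δ ^ κ ≤ ((r/4) ^ (1/κ)) ^ κ :=
      Real.rpow_le_rpow hδ0.le (hδδ₀.le.trans (min_le_right _ _)) hκ₀.le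
    calc δ ^ κ ≤ ((r/4) ^ (1/κ)) ^ κ := h1
      _ = r/4 := by
        rw [← Real.rpow_mul (by positivity), one_div_mul_cancel hκ₀.ne', Real.rpow_one]
  have hδδκ : δ ≤ δ ^ κ := by
    nth_rewrite 1 [← Real.rpow_one δ]
    exact Real.rpow_le_rpow_of_exponent_ge hδ0 hδ1.le hκ₁
  have hneg : δ ^ (-κ) = (δ ^ κ)⁻¹ := Real.rpow_neg hδ0.le κ
  set A : ℝ := δ ^ (-κ) * r with hA_def
  have hA0 : 0 < A := by
    rw [hA_def]; exact mul_pos (Real.rpow_pos_of_pos hδ0 _) hr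
  have hA4 : 4 ≤ A := by
    rw [hA_def, hneg, inv_mul_eq_div, le_div_iff₀ hδκ]
    linarith
  have hAδκ : A * δ ^ κ = r := by
    rw [hA_def, hneg]; field_simp
  set M : ℤ := ⌊A⌋ with hM_def
  have hM4 : (4:ℤ) ≤ M := by
    rw [hM_def]; exact Int.le_floor.mpr (by exact_mod_cast hA4)
  have hMA : (M:ℝ) ≤ A := Int.floor_le A
  have hAM : A - 1 ≤ (M:ℝ) := by have := Int.lt_floor_add_one A; rw [← hM_def] at this; linarith
  -- D
  set D : ℝ := δ ^ (-((d:ℝ) * κ)) with hD_def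
  have hD : D = (δ ^ (-κ))^d := by
    rw [hD_def, ← Real.rpow_natCast (δ ^ (-κ)) d, ← Real.rpow_mul hδ0.le]
    congr 1; ring
  have hD0 : 0 < D := by rw [hD_def]; exact Real.rpow_pos_of_pos hδ0 _
  -- the grid map
  set f : (Fin d → ℤ) → (Fin d → ℝ) := fun x j => δ ^ κ * (x j : ℝ) with hf_def
  have hf_inj : Function.Injective f := by
    intro x y hxy
    funext j
    have h1 : δ ^ κ * (x j : ℝ) = δ ^ κ * (y j : ℝ) := congrFun hxy j
    have h2 := mul_left_cancel₀ hδκ.ne' h1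
    exact_mod_cast h2
  have habs : ∀ x : Fin d → ℤ, (∀ j, |(x j : ℝ)| ≤ A) ↔ x ∈ intBox d M := by
    intro x
    rw [intBox_mem]
    constructor
    · intro h j
      exact Int.le_floor.mpr (by rw [Int.cast_abs]; exact h j)
    · intro h j
      have h1 : ((|x j| : ℤ) : ℝ) ≤ (M:ℝ) := by exact_mod_cast h j
      rw [Int.cast_abs] at h1
      exact h1.trans hMA
  have hPmem : P = f '' (intBox d M : Set (Fin d → ℤ)) := by
    rw [hP]
    ext p
    simp only [Set.mem_setOf_eq, Set.mem_image, Finset.mem_coe]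
    constructor
    · rintro ⟨x, hx, rfl⟩
      exact ⟨x, (habs x).mp hx, rfl⟩
    · rintro ⟨x, hx, rfl⟩
      exact ⟨x, (habs x).mpr hx, rfl⟩
  -- upper covering of P
  set T : Finset (Fin d → ℝ) := (intBox d M).image f with hT_def
  have hTcover : P ⊆ ⋃ t ∈ T, closedBall t δ := by
    intro p hp
    rw [hPmem] at hp
    obtain ⟨x, hx, rfl⟩ := hp
    exact Set.mem_biUnion (Finset.mem_image_of_mem f hx) (mem_closedBall_self hδ0.le)
  have hupper : (coveringNumber P δ : ℝ) ≤ ((2*M+1:ℤ):ℝ)^d := by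
    have h1 : coveringNumber P δ ≤ T.card := coveringNumber_le_card T hTcover
    have h2 : T.card ≤ (intBox d M).card := Finset.card_image_le
    calc (coveringNumber P δ : ℝ) ≤ ((intBox d M).card : ℝ) := by exact_mod_cast h1.trans h2
      _ = _ := intBox_card d (by omega)
  -- lower bound Q
  set K : ℤ := M / 3 with hK_def
  have hK3 : 3 * K ≤ M ∧ M - 2 ≤ 3 * K := by omega
  have hK0 : (0:ℤ) ≤ K := by omega
  have hKR : A / 4 ≤ ((2*K+1:ℤ):ℝ) := by
    have h1 : ((M:ℝ) - 2) ≤ 3 * (K:ℝ) := by exact_mod_cast hK3.2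
    push_cast
    linarith
  set g : (Fin d → ℤ) → (Fin d → ℝ) := fun y => f (fun j => 3 * y j) with hg_def
  have hg_inj : Function.Injective g := by
    intro a b hab
    have h1 := hf_inj hab
    funext j
    have := congrFun h1 j
    simpa using this
  set Q : Finset (Fin d → ℝ) := (intBox d K).image g with hQ_def
  have hQP : ↑Q ⊆ P := by
    intro p hp
    simp only [hQ_def, Finset.coe_image, Set.mem_image, Finset.mem_coe] at hp
    obtain ⟨y, hy, rfl⟩ := hp
    rw [hPmem]
    refine ⟨fun j => 3 * y j, ?_, rfl⟩
    refine Finset.mem_coe.mpr (intBox_mem.mpr fun j => ?_)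
    have h1 := intBox_mem.mp hy j
    rw [abs_le] at h1 ⊢
    omega
  have hQsep : ∀ a ∈ Q, ∀ b ∈ Q, a ≠ b → 2 * δ < dist a b := by
    intro a ha b hb hab
    simp only [hQ_def, Finset.mem_image] at ha hb
    obtain ⟨y, hy, rfl⟩ := ha
    obtain ⟨z, hz, rfl⟩ := hb
    have hyz : y ≠ z := fun h => hab (by rw [h])
    obtain ⟨j, hj⟩ : ∃ j, y j ≠ z j := by
      by_contra h; push_neg at h; exact hyz (funext h)
    have h1 : dist (g y j) (g z j) ≤ dist (g y) (g z) := dist_le_pi_dist _ _ j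
    have hcast1 : (1:ℝ) ≤ |(y j : ℝ) - (z j : ℝ)| := by
      have hint : (1:ℤ) ≤ |y j - z j| := Int.one_le_abs (sub_ne_zero.mpr hj)
      exact_mod_cast hint
    have h2 : 3 * δ ^ κ ≤ dist (g y j) (g z j) := by
      simp only [hg_def, hf_def]
      rw [Real.dist_eq]
      have heq : δ ^ κ * ((3*y j:ℤ):ℝ) - δ ^ κ * ((3*z j:ℤ):ℝ)
          = (3*δ^κ) * ((y j:ℝ) - (z j:ℝ)) := by push_cast; ring
      push_cast
      push_cast at heq
      rw [heq, abs_mul, abs_of_pos (by positivity)]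
      nlinarith [hδκ, hcast1]
    calc 2*δ < 3*δ := by linarith
      _ ≤ 3*δ^κ := by linarith
      _ ≤ dist (g y j) (g z j) := h2
      _ ≤ dist (g y) (g z) := h1
  have hQcard : ((A/4)^d : ℝ) ≤ (Q.card : ℝ) := by
    have h1 : Q.card = (intBox d K).card := Finset.card_image_of_injective _ hg_inj
    rw [h1, intBox_card d hK0]
    exact pow_le_pow_left₀ (by positivity) hKR d
  have hNlow : ((A/4)^d : ℝ) ≤ (coveringNumber P δ : ℝ) := by
    have h1 := le_coveringNumber Q hQP hQsep ⟨T, hTcover⟩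
    calc ((A/4)^d : ℝ) ≤ (Q.card:ℝ) := hQcard
      _ ≤ _ := by exact_mod_cast h1
  have hA4D : (A/4)^d = (r/4)^d * D := by
    have h1 : A/4 = (r/4) * δ^(-κ) := by rw [hA_def]; ring
    rw [h1, mul_pow, hD]
  -- R and rounding
  set R : ℝ := (M:ℝ) * δ ^ κ with hR_def
  have hR0 : 0 ≤ R := by
    rw [hR_def]; positivity
  have hR1 : 3*r/4 ≤ R := by
    rw [hR_def]
    have h34 : 3/4*A ≤ (M:ℝ) := by linarith
    have hmul := mul_le_mul_of_nonneg_right h34 hδκ.le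
    nlinarith [hmul, hAδκ, hδκ]
  have hR2 : R ≤ r := by
    rw [hR_def]
    have hmul := mul_le_mul_of_nonneg_right hMA hδκ.le
    linarith [hmul, hAδκ]
  have round : ∀ w : Fin d → ℝ, ‖w‖ ≤ R → ∃ p ∈ P, ‖p - w‖ ≤ δ ^ κ := by
    intro w hw
    have hwj : ∀ j, |w j| ≤ R := by
      intro j
      have := norm_le_pi_norm w j
      rw [Real.norm_eq_abs] at this
      exact this.trans hw
    have hxbound : ∀ j, |⌊w j / δ ^ κ⌋| ≤ M := by
      intro j
      have hj := abs_le.mp (hwj j)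
      rw [hR_def] at hj
      rw [abs_le]
      constructor
      · apply Int.le_floor.mpr
        push_cast
        rw [le_div_iff₀ hδκ]
        linarith [hj.1]
      · have hle : w j / δ ^ κ ≤ (M:ℝ) := by
          rw [div_le_iff₀ hδκ]; linarith [hj.2]
        calc ⌊w j / δ ^ κ⌋ ≤ ⌊(M:ℝ)⌋ := Int.floor_le_floor hle
          _ = M := Int.floor_intCast M
    refine ⟨f (fun j => ⌊w j / δ ^ κ⌋), ?_, ?_⟩
    · rw [hPmem]
      exact ⟨_, Finset.mem_coe.mpr (intBox_mem.mpr hxbound), rfl⟩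
    · rw [← dist_eq_norm]
      rw [dist_pi_le_iff hδκ.le]
      intro j
      rw [Real.dist_eq]
      simp only [hf_def]
      have h1 := Int.floor_le (w j / δ ^ κ)
      have h2 := Int.lt_floor_add_one (w j / δ ^ κ)
      have hwje : w j = δ ^ κ * (w j / δ ^ κ) := by field_simp
      have heq : δ ^ κ * ((⌊w j / δ ^ κ⌋ : ℤ) : ℝ) - w j
          = δ ^ κ * (((⌊w j / δ ^ κ⌋ : ℤ) : ℝ) - w j / δ ^ κ) := by
        rw [mul_sub, ← hwje]
      rw [heq, abs_mul, abs_of_pos hδκ]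
      have habs1 : |((⌊w j / δ ^ κ⌋ : ℤ) : ℝ) - w j / δ ^ κ| ≤ 1 := by
        rw [abs_le]
        constructor <;> linarith
      exact mul_le_of_le_one_right hδκ.le habs1
  -- final splits
  refine ⟨⟨?_, ?_⟩, ?_, ?_, ?_⟩
  · -- (i) lower
    calc c * D ≤ (r/4)^d * D := mul_le_mul_of_nonneg_right (min_le_left _ _) hD0.le
      _ = (A/4)^d := hA4D.symm
      _ ≤ _ := hNlow
  · -- (i) upper
    have h2M1 : ((2*M+1:ℤ):ℝ) ≤ 3*A := by push_cast; linarith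
    have h3A : (3*A)^d = (3*r)^d * D := by
      have h1 : 3*A = (3*r)*(δ^(-κ)) := by rw [hA_def]; ring
      rw [h1, mul_pow, hD]
    have h28 : (0:ℝ) ≤ 28^d * D := by positivity
    calc (coveringNumber P δ : ℝ) ≤ ((2*M+1:ℤ):ℝ)^d := hupper
      _ ≤ (3*A)^d := pow_le_pow_left₀ (by positivity) h2M1 d
      _ = (3*r)^d * D := h3A
      _ ≤ C * D := by rw [hC_def]; ring_nf; ring_nf at h28; linarith
  · -- (ii)
    set T3 : Finset (Fin d → ℝ) := (intBox d (3*M)).image f with hT3_def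
    have hcover3 : P + P + P ⊆ ⋃ t ∈ T3, closedBall t δ := by
      intro p hp
      rw [Set.mem_add] at hp
      obtain ⟨a, ha, b, hb, rfl⟩ := hp
      rw [Set.mem_add] at ha
      obtain ⟨a1, ha1, a2, ha2, rfl⟩ := ha
      rw [hPmem] at ha1 ha2 hb
      obtain ⟨x, hx, rfl⟩ := ha1
      obtain ⟨y, hy, rfl⟩ := ha2
      obtain ⟨z, hz, rfl⟩ := hb
      have hsum : f x + f y + f z = f (x + y + z) := by
        funext j; simp only [hf_def, Pi.add_apply]; push_cast; ring
      rw [hsum]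
      refine Set.mem_biUnion (Finset.mem_image_of_mem f ?_) (mem_closedBall_self hδ0.le)
      refine intBox_mem.mpr fun j => ?_
      have h1 := intBox_mem.mp (Finset.mem_coe.mp hx) j
      have h2 := intBox_mem.mp (Finset.mem_coe.mp hy) j
      have h3 := intBox_mem.mp (Finset.mem_coe.mp hz) j
      simp only [Pi.add_apply]
      rw [abs_le] at h1 h2 h3 ⊢
      omega
    have h6M : (coveringNumber (P+P+P) δ : ℝ) ≤ ((2*(3*M)+1:ℤ):ℝ)^d := by
      have h1 : coveringNumber (P+P+P) δ ≤ T3.card := coveringNumber_le_card T3 hcover3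
      have h2 : T3.card ≤ (intBox d (3*M)).card := Finset.card_image_le
      calc (coveringNumber (P+P+P) δ : ℝ) ≤ ((intBox d (3*M)).card : ℝ) := by
            exact_mod_cast h1.trans h2
        _ = _ := intBox_card d (by omega)
    have h7 : ((2*(3*M)+1:ℤ):ℝ) ≤ 28 * (A/4) := by push_cast; linarith
    have hN0 : (0:ℝ) ≤ (coveringNumber P δ : ℝ) := Nat.cast_nonneg _
    calc (coveringNumber (P+P+P) δ : ℝ) ≤ ((2*(3*M)+1:ℤ):ℝ)^d := h6M
      _ ≤ (28 * (A/4))^d := pow_le_pow_left₀ (by positivity) h7 d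
      _ = 28^d * (A/4)^d := by rw [mul_pow]
      _ ≤ 28^d * (coveringNumber P δ : ℝ) :=
          mul_le_mul_of_nonneg_left hNlow (by positivity)
      _ ≤ C * (coveringNumber P δ : ℝ) := by
          rw [hC_def]
          have h3 : (0:ℝ) ≤ (3*r)^d * (coveringNumber P δ : ℝ) := by positivity
          nlinarith
  · -- (iii)
    intro W hW ρ hδρ hρ1
    have hρ0 : 0 < ρ := lt_of_lt_of_le hδ0 hδρ
    obtain ⟨v, hv1, hvq⟩ := exists_norming hW
    set s : ℝ := 3*ρ + 2*δ^κ with hs_def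
    have hs0 : 0 < s := by rw [hs_def]; linarith
    set n : ℕ := ⌊R/s⌋₊ with hn_def
    have hns : (n:ℝ) * s ≤ R := by
      have h1 : (n:ℝ) ≤ R/s := Nat.floor_le (by positivity)
      exact (le_div_iff₀ hs0).mp h1
    have hn1 : R/s < (n:ℝ) + 1 := Nat.lt_floor_add_one _
    have hwk : ∀ k : ℕ, ‖(min ((k:ℝ)*s) R) • v‖ ≤ R := by
      intro k
      rw [norm_smul, hv1, mul_one, Real.norm_eq_abs,
        abs_of_nonneg (le_min (by positivity) hR0)]
      exact min_le_right _ _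
    choose p hpP hpd using fun k : ℕ => round ((min ((k:ℝ)*s) R) • v) (hwk k)
    have hmin : ∀ k : ℕ, k ≤ n → min ((k:ℝ)*s) R = (k:ℝ)*s := by
      intro k hk
      refine min_eq_left ?_
      calc (k:ℝ)*s ≤ (n:ℝ)*s := by
            apply mul_le_mul_of_nonneg_right (by exact_mod_cast hk) hs0.le
        _ ≤ R := hns
    have hνp : ∀ k : ℕ, k ≤ n →
        |‖(Submodule.Quotient.mk (p k) : (Fin d → ℝ) ⧸ W)‖ - (k:ℝ)*s| ≤ δ^κ := by
      intro k hk
      have h1 := quot_norm_lip W (p k) ((min ((k:ℝ)*s) R) • v)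
      have h2 := hpd k
      have h3 : ‖(Submodule.Quotient.mk ((min ((k:ℝ)*s) R) • v) : (Fin d → ℝ) ⧸ W)‖
          = (k:ℝ)*s := by
        rw [quot_norm_smul, hvq, mul_one, hmin k hk, abs_of_nonneg (by positivity)]
      rw [h3] at h1
      exact h1.trans h2
    have hsepk : ∀ k ∈ Finset.range (n+1), ∀ l ∈ Finset.range (n+1), k ≠ l →
        2*ρ < dist (Submodule.Quotient.mk (p k) : (Fin d → ℝ) ⧸ W)
          (Submodule.Quotient.mk (p l)) := by
      intro k hk l hl hkl
      rw [Finset.mem_range] at hk hl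
      have h1 := hνp k (by omega)
      have h2 := hνp l (by omega)
      have h3 : s ≤ |(k:ℝ)*s - (l:ℝ)*s| := by
        have hint : (1:ℤ) ≤ |(k:ℤ) - (l:ℤ)| :=
          Int.one_le_abs (sub_ne_zero.mpr (by exact_mod_cast hkl))
        have hcast : (1:ℝ) ≤ |(k:ℝ) - (l:ℝ)| := by exact_mod_cast hint
        have heq : (k:ℝ)*s - (l:ℝ)*s = ((k:ℝ) - (l:ℝ)) * s := by ring
        rw [heq, abs_mul, abs_of_pos hs0]
        nlinarith
      have h4 := sep_of_close_values h1 h2 h3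
      have h5 : |‖(Submodule.Quotient.mk (p k) : (Fin d → ℝ) ⧸ W)‖ -
          ‖(Submodule.Quotient.mk (p l) : (Fin d → ℝ) ⧸ W)‖| ≤
          dist (Submodule.Quotient.mk (p k) : (Fin d → ℝ) ⧸ W)
            (Submodule.Quotient.mk (p l)) := by
        rw [dist_eq_norm]
        exact abs_norm_sub_norm_le _ _
      have hs3 : s - 2*δ^κ = 3*ρ := by rw [hs_def]; ring
      linarith
    set Q3 : Finset ((Fin d → ℝ) ⧸ W) :=
      (Finset.range (n+1)).image
        (fun k => (Submodule.Quotient.mk (p k) : (Fin d → ℝ) ⧸ W)) with hQ3_def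
    have hQ3card : Q3.card = n + 1 := by
      rw [hQ3_def, Finset.card_image_of_injOn, Finset.card_range]
      intro k hk l hl hkl
      by_contra hne
      have h9 := hsepk k hk l hl hne
      have hkl' : (Submodule.Quotient.mk (p k) : (Fin d → ℝ) ⧸ W)
          = Submodule.Quotient.mk (p l) := hkl
      rw [hkl'] at h9
      simp at h9
      linarith
    have hQ3S : ↑Q3 ⊆ (Submodule.Quotient.mk (p := W) '' P) := by
      intro q hq
      simp only [hQ3_def, Finset.coe_image, Set.mem_image, Finset.mem_coe] at hq
      obtain ⟨k, hk, rfl⟩ := hq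
      exact ⟨p k, hpP k, rfl⟩
    have hQ3sep : ∀ a ∈ Q3, ∀ b ∈ Q3, a ≠ b → 2*ρ < dist a b := by
      intro a ha b hb hab
      simp only [hQ3_def, Finset.mem_image] at ha hb
      obtain ⟨k, hk, rfl⟩ := ha
      obtain ⟨l, hl, rfl⟩ := hb
      exact hsepk k hk l hl (fun h => hab (by rw [h]))
    have hTq : (Submodule.Quotient.mk (p := W) '' P) ⊆
        ⋃ t ∈ T.image (fun z => (Submodule.Quotient.mk z : (Fin d → ℝ) ⧸ W)),
          closedBall t ρ := by
      rintro q ⟨p', hp', rfl⟩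
      rw [hPmem] at hp'
      obtain ⟨x, hx, rfl⟩ := hp'
      exact Set.mem_biUnion
        (Finset.mem_image_of_mem _ (Finset.mem_image_of_mem f (Finset.mem_coe.mp hx)))
        (mem_closedBall_self hρ0.le)
    have hcount : ((n:ℝ) + 1) ≤
        (coveringNumber (Submodule.Quotient.mk (p := W) '' P) ρ : ℝ) := by
      have h1 := le_coveringNumber Q3 hQ3S hQ3sep ⟨_, hTq⟩
      rw [hQ3card] at h1
      exact_mod_cast h1
    have hkey : c * ρ^(-κ) ≤ R/s := by
      rcases le_total (δ^κ) ρ with hcase | hcase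
      · have h5 : s ≤ 5*ρ := by rw [hs_def]; linarith
        have hstep1 : (3*r/4)/(5*ρ) ≤ R/s := div_le_div₀ hR0 hR1 hs0 h5
        have hρinv : ρ^(-κ) ≤ ρ⁻¹ := by
          have h1 := Real.rpow_le_rpow_of_exponent_ge hρ0 hρ1 (neg_le_neg hκ₁)
          rwa [Real.rpow_neg_one] at h1
        have heq : (3*r/4)/(5*ρ) = (3*r/20) * ρ⁻¹ := by
          field_simp; ring
        have h0 : (0:ℝ) ≤ ρ^(-κ) := (Real.rpow_pos_of_pos hρ0 _).le
        calc c * ρ^(-κ) ≤ (3*r/20) * ρ^(-κ) :=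
              mul_le_mul_of_nonneg_right (by linarith) h0
          _ ≤ (3*r/20) * ρ⁻¹ := mul_le_mul_of_nonneg_left hρinv (by positivity)
          _ = (3*r/4)/(5*ρ) := heq.symm
          _ ≤ R/s := hstep1
      · have h5 : s ≤ 5*δ^κ := by rw [hs_def]; linarith
        have hstep1 : (3*r/4)/(5*δ^κ) ≤ R/s := div_le_div₀ hR0 hR1 hs0 h5
        have hρinv : ρ^(-κ) ≤ (δ^κ)⁻¹ := by
          rw [Real.rpow_neg hρ0.le]
          exact inv_anti₀ hδκ (Real.rpow_le_rpow hδ0.le hδρ hκ₀.le)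
        have heq : (3*r/4)/(5*δ^κ) = (3*r/20) * (δ^κ)⁻¹ := by
          field_simp; ring
        have h0 : (0:ℝ) ≤ ρ^(-κ) := (Real.rpow_pos_of_pos hρ0 _).le
        calc c * ρ^(-κ) ≤ (3*r/20) * ρ^(-κ) :=
              mul_le_mul_of_nonneg_right (by linarith) h0
          _ ≤ (3*r/20) * (δ^κ)⁻¹ := mul_le_mul_of_nonneg_left hρinv (by positivity)
          _ = (3*r/4)/(5*δ^κ) := heq.symm
          _ ≤ R/s := hstep1
    calc c * ρ^(-κ) ≤ R/s := hkey
      _ ≤ (n:ℝ) + 1 := hn1.le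
      _ ≤ _ := hcount
  · -- (iv)
    intro W hW
    obtain ⟨v, hv1, hvq⟩ := exists_norming hW
    obtain ⟨p, hpP, hpd⟩ := round (R • v) (by
      rw [norm_smul, hv1, mul_one, Real.norm_eq_abs, abs_of_nonneg hR0])
    refine ⟨p, hpP, ?_⟩
    have h1 := quot_norm_lip W p (R • v)
    have h2 : ‖(Submodule.Quotient.mk (R • v) : (Fin d → ℝ) ⧸ W)‖ = R := by
      rw [quot_norm_smul, hvq, mul_one, abs_of_nonneg hR0]
    have h3 := quot_norm_eq_infDist W p
    rw [← h3]
    rw [h2] at h1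
    have habs2 := abs_le.mp (h1.trans hpd)
    linarith [hR1, hδκ_r, habs2.1, hcr20]
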